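/- The Lorentz cone L_{2n} is a retract of PSD_{2^n}: with anticommuting trace-zero Hermitian unitaries U_1,…,U_{2n} of size 2ⁿ, the maps Φ(A) = (tr(AU_1),…,tr(AU_{2n}), tr A) and Ψ(x) = Σᵢ xᵢUᵢ + x_{2n+1}·Id satisfy Φ(PSD_{2^n}) ⊆ L_{2n}, Ψ(L_{2n}) ⊆ PSD_{2^n}, and Φ ∘ Ψ = 2ⁿ · id on ℝ^{2n+1}. -/

import Mathlib

set_option linter.unusedSectionVars false
set_option linter.unnecessarySeqFocus false
set_option maxHeartbeats 1000000

open scoped ComplexOrder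

/-- The Lorentz cone of parameter `r` in `ℝ^(n+1)`. -/
noncomputable def lorentz (n : ℕ) (r : ℝ) : Set (Fin (n + 1) → ℝ) :=
  {x | Real.sqrt (∑ i : Fin n, x i.castSucc ^ 2) ≤ r * x (Fin.last n)}

/-- The map `A ↦ (tr(AU₁), …, tr(AU_{2n}), tr A)`. -/
noncomputable def PhiMap (n : ℕ) (U : Fin (2 * n) → Matrix (Fin (2 ^ n)) (Fin (2 ^ n)) ℂ)
    (A : Matrix (Fin (2 ^ n)) (Fin (2 ^ n)) ℂ) : Fin (2 * n + 1) → ℝ :=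
  Fin.snoc (fun i => (Matrix.trace (A * U i)).re) (Matrix.trace A).re

/-- The map `x ↦ Σᵢ xᵢ Uᵢ + x_{2n+1} Id`. -/
noncomputable def PsiMap (n : ℕ) (U : Fin (2 * n) → Matrix (Fin (2 ^ n)) (Fin (2 ^ n)) ℂ)
    (x : Fin (2 * n + 1) → ℝ) : Matrix (Fin (2 ^ n)) (Fin (2 ^ n)) ℂ :=
  ∑ i : Fin (2 * n), x i.castSucc • U i + x (Fin.last (2 * n)) • 1

namespace Stmt15Aux

open Matrix

variable {m : Type*} [Fintype m] [DecidableEq m]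

lemma psd_add {A B : Matrix m m ℂ} (hA : A.PosSemidef) (hB : B.PosSemidef) :
    (A + B).PosSemidef := by
  refine .of_dotProduct_mulVec_nonneg (hA.1.add hB.1) fun x => ?_
  simp only [add_mulVec, dotProduct_add]
  exact add_nonneg (hA.dotProduct_mulVec_nonneg x) (hB.dotProduct_mulVec_nonneg x)

lemma psd_smul {c : ℝ} (hc : 0 ≤ c) {A : Matrix m m ℂ} (hA : A.PosSemidef) :
    (c • A).PosSemidef := by
  refine .of_dotProduct_mulVec_nonneg ?_ fun x => ?_
  · have := hA.1.eq
    simp [Matrix.IsHermitian, Matrix.conjTranspose_smul, this]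
  · simp only [smul_mulVec, dotProduct_smul]
    have h := hA.dotProduct_mulVec_nonneg x
    rw [show (c • (star x ⬝ᵥ A *ᵥ x)) = (c:ℂ) * (star x ⬝ᵥ A *ᵥ x) from Complex.real_smul]
    exact mul_nonneg (by exact_mod_cast Complex.zero_le_real.mpr hc) h

lemma psd_trace_nonneg {A : Matrix m m ℂ} (hA : A.PosSemidef) :
    0 ≤ Matrix.trace A := by
  rw [Matrix.trace]
  apply Finset.sum_nonneg
  intro i _
  have h := hA.dotProduct_mulVec_nonneg (Pi.single i 1)
  simpa [Matrix.mulVec_single, dotProduct, Pi.single_apply, Finset.sum_ite_eq] using h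

lemma psd_trace_re_nonneg {A : Matrix m m ℂ} (hA : A.PosSemidef) :
    0 ≤ (Matrix.trace A).re := by
  have h := psd_trace_nonneg hA
  rw [Complex.le_def] at h
  simpa using h.1

section Core
variable {n : ℕ} {U : Fin (2*n) → Matrix (Fin (2 ^ n)) (Fin (2 ^ n)) ℂ}
variable (hherm : ∀ i, (U i).IsHermitian)
variable (hanti : ∀ i j, U i * U j + U j * U i =
      if i = j then (2 : ℂ) • (1 : Matrix (Fin (2 ^ n)) (Fin (2 ^ n)) ℂ) else 0)

include hanti in
lemma sum_sq (y : Fin (2*n) → ℝ) :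
    (∑ i, y i • U i) * (∑ i, y i • U i) = ((∑ i, y i ^ 2 : ℝ)) • 1 := by
  have expand : (∑ i, y i • U i) * (∑ j, y j • U j)
      = ∑ i, ∑ j, (y i * y j) • (U i * U j) := by
    rw [Finset.sum_mul]
    refine Finset.sum_congr rfl fun i _ => ?_
    rw [Finset.mul_sum]
    refine Finset.sum_congr rfl fun j _ => ?_
    rw [smul_mul_assoc, mul_smul_comm, smul_smul]
  have swap : ∑ i : Fin (2*n), ∑ j : Fin (2*n), (y i * y j) • (U j * U i)
      = ∑ i, ∑ j, (y i * y j) • (U i * U j) := by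
    rw [Finset.sum_comm]
    exact Finset.sum_congr rfl fun i _ => Finset.sum_congr rfl fun j _ => by
      rw [mul_comm (y j)]
  have h2 : (2:ℝ) • ((∑ i, y i • U i) * (∑ i, y i • U i))
      = (2:ℝ) • (((∑ i, y i ^ 2 : ℝ)) • (1 : Matrix (Fin (2 ^ n)) (Fin (2 ^ n)) ℂ)) := by
    rw [two_smul, expand]
    nth_rewrite 2 [← swap]
    rw [← Finset.sum_add_distrib]
    have e1 : ∀ i ∈ (Finset.univ : Finset (Fin (2*n))),
        ((∑ j, (y i * y j) • (U i * U j)) + (∑ j, (y i * y j) • (U j * U i)))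
        = (y i * y i) • ((2:ℂ) • (1 : Matrix (Fin (2 ^ n)) (Fin (2 ^ n)) ℂ)) := by
      intro i _
      rw [← Finset.sum_add_distrib]
      simp_rw [← smul_add, hanti]
      simp [apply_ite ((y i * y _) • ·)]
    rw [Finset.sum_congr rfl e1]
    simp_rw [smul_comm _ (2:ℂ), ← Finset.smul_sum, ← Finset.sum_smul]
    rw [show ∑ i, y i * y i = ∑ i, y i ^ 2 from by simp [sq]]
    rw [two_smul, two_smul]
  exact smul_right_injective _ (two_ne_zero) h2

include hanti in
lemma trU (i j : Fin (2*n)) :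
    Matrix.trace (U i * U j) = if i = j then ((2:ℂ) ^ n) else 0 := by
  have h := congrArg Matrix.trace (hanti i j)
  rw [Matrix.trace_add, Matrix.trace_mul_comm (U j)] at h
  have h2 : (2:ℂ) * Matrix.trace (U i * U j)
      = Matrix.trace (if i = j then (2 : ℂ) • (1 : Matrix (Fin (2 ^ n)) (Fin (2 ^ n)) ℂ) else 0) := by
    rw [← h]; ring
  split_ifs at h2 ⊢ with hij
  · rw [Matrix.trace_smul, Matrix.trace_one] at h2
    rw [smul_eq_mul] at h2
    have hc : ((Fintype.card (Fin (2^n)) : ℂ)) = 2^n := by simp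
    rw [hc] at h2
    linear_combination h2 / 2
  · rw [Matrix.trace_zero] at h2
    exact (mul_eq_zero.mp h2).resolve_left two_ne_zero

include hherm hanti in
lemma psd_aux (y : Fin (2*n) → ℝ) (c : ℝ) (hyc : Real.sqrt (∑ i, y i ^ 2) ≤ c) :
    ((∑ i, y i • U i) + c • (1 : Matrix (Fin (2 ^ n)) (Fin (2 ^ n)) ℂ)).PosSemidef := by
  set S := ∑ i, y i • U i with hS
  have hsum : 0 ≤ ∑ i, y i ^ 2 := Finset.sum_nonneg fun i _ => sq_nonneg _
  set r := Real.sqrt (∑ i, y i ^ 2) with hr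
  have hr0 : 0 ≤ r := Real.sqrt_nonneg _
  have hrr : r * r = ∑ i, y i ^ 2 := Real.mul_self_sqrt hsum
  have hS2 : S * S = ((∑ i, y i ^ 2 : ℝ)) • 1 := sum_sq hanti y
  have hSh : Sᴴ = S := by
    rw [hS, Matrix.conjTranspose_sum]
    exact Finset.sum_congr rfl fun i _ => by
      rw [Matrix.conjTranspose_smul, star_trivial, (hherm i).eq]
  rcases eq_or_lt_of_le hr0 with h0 | hpos
  · have hy0 : ∀ i, y i = 0 := by
      intro i
      have hz : ∑ i, y i ^ 2 = 0 := by rw [← hrr, ← h0]; ring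
      have := (Finset.sum_eq_zero_iff_of_nonneg
        (fun i _ => sq_nonneg (y i))).mp hz i (Finset.mem_univ i)
      exact pow_eq_zero_iff two_ne_zero |>.mp this
    have hS0 : S = 0 := by
      rw [hS]; exact Finset.sum_eq_zero fun i _ => by rw [hy0 i, zero_smul]
    rw [hS0, zero_add]
    exact psd_smul (le_trans (le_of_eq h0) hyc) Matrix.PosSemidef.one
  · have hherm2 : (S + r • 1)ᴴ = S + r • (1 : Matrix (Fin (2 ^ n)) (Fin (2 ^ n)) ℂ) := by
      rw [Matrix.conjTranspose_add, hSh, Matrix.conjTranspose_smul, star_trivial,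
        Matrix.conjTranspose_one]
    have expand2 : (S + r • 1) * (S + r • 1)
        = (2*r) • S + (2*(r*r)) • (1 : Matrix (Fin (2 ^ n)) (Fin (2 ^ n)) ℂ) := by
      rw [mul_add, add_mul, add_mul, hS2, ← hrr]
      simp only [smul_mul_assoc, mul_smul_comm, one_mul, mul_one, smul_smul]
      module
    have key : S + c • 1 = (c - r) • (1 : Matrix (Fin (2 ^ n)) (Fin (2 ^ n)) ℂ)
        + ((2*r)⁻¹) • ((S + r • 1) * (S + r • 1)ᴴ) := by
      rw [hherm2, expand2]
      match_scalars <;> field_simp <;> ring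
    rw [key]
    refine psd_add (psd_smul (by linarith) Matrix.PosSemidef.one)
      (psd_smul (by positivity) ?_)
    exact Matrix.posSemidef_self_mul_conjTranspose _

end Core

end Stmt15Aux

open scoped MatrixOrder in
open Stmt15Aux Matrix in
theorem stmt15 (n : ℕ) (U : Fin (2 * n) → Matrix (Fin (2 ^ n)) (Fin (2 ^ n)) ℂ)
    (hherm : ∀ i, (U i).IsHermitian)
    (htr : ∀ i, Matrix.trace (U i) = 0)
    (hanti : ∀ i j, U i * U j + U j * U i =
      if i = j then (2 : ℂ) • (1 : Matrix (Fin (2 ^ n)) (Fin (2 ^ n)) ℂ) else 0) :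
    (∀ A : Matrix (Fin (2 ^ n)) (Fin (2 ^ n)) ℂ, A.PosSemidef →
        PhiMap n U A ∈ lorentz (2 * n) 1) ∧
    (∀ x ∈ lorentz (2 * n) 1, (PsiMap n U x).PosSemidef) ∧
    (∀ x : Fin (2 * n + 1) → ℝ, PhiMap n U (PsiMap n U x) = ((2 : ℝ) ^ n) • x) := by
  refine ⟨?_, ?_, ?_⟩
  · -- Part 1 : Φ maps PSD into the Lorentz cone
    intro A hA
    set y : Fin (2*n) → ℝ := fun i => (Matrix.trace (A * U i)).re with hy
    have htrA : 0 ≤ (Matrix.trace A).re := psd_trace_re_nonneg hA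
    have hsum : 0 ≤ ∑ i, y i ^ 2 := Finset.sum_nonneg fun i _ => sq_nonneg _
    set r := Real.sqrt (∑ i, y i ^ 2) with hr
    have hr0 : 0 ≤ r := Real.sqrt_nonneg _
    have hrr : r * r = ∑ i, y i ^ 2 := Real.mul_self_sqrt hsum
    suffices h : r ≤ (Matrix.trace A).re by
      simp only [lorentz, Set.mem_setOf_eq, PhiMap, Fin.snoc_castSucc, Fin.snoc_last, one_mul]
      exact h
    rcases eq_or_lt_of_le hr0 with h0 | hpos
    · rw [← h0]; exact htrA
    · set z : Fin (2*n) → ℝ := fun i => -(y i) / r with hz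
      have hz1 : Real.sqrt (∑ i, z i ^ 2) ≤ 1 := by
        have hone : ∑ i, z i ^ 2 = 1 := by
          have e : ∀ i ∈ (Finset.univ : Finset (Fin (2*n))), z i ^ 2 = y i ^ 2 / (r * r) :=
            fun i _ => by simp only [hz]; rw [div_pow, neg_sq, pow_two r]
          rw [Finset.sum_congr rfl e, ← Finset.sum_div, ← hrr]
          field_simp
        rw [hone, Real.sqrt_one]
      set M := (∑ i, z i • U i) + (1:ℝ) • (1 : Matrix (Fin (2 ^ n)) (Fin (2 ^ n)) ℂ) with hM
      have hMpsd : M.PosSemidef := psd_aux hherm hanti z 1 hz1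
      have h1 : Matrix.trace (A * M) = Matrix.trace (CFC.sqrt A * M * CFC.sqrt A) := by
        conv_lhs => rw [← CFC.sqrt_mul_sqrt_self A hA.nonneg]
        rw [Matrix.mul_assoc, Matrix.trace_mul_comm, Matrix.mul_assoc]
      have h2 : 0 ≤ (Matrix.trace (A * M)).re := by
        rw [h1]
        have h3 := hMpsd.mul_mul_conjTranspose_same (CFC.sqrt A)
        rw [(CFC.sqrt_nonneg A).posSemidef.isHermitian.eq] at h3
        exact psd_trace_re_nonneg h3
      have h5 : (Matrix.trace (A * M)).re = (∑ i, z i * y i) + (Matrix.trace A).re := by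
        have hAM : A * M = (∑ i, z i • (A * U i)) + A := by
          rw [hM, mul_add, Finset.mul_sum]
          simp [mul_smul_comm]
        rw [hAM, Matrix.trace_add, Matrix.trace_sum]
        simp only [Matrix.trace_smul, Complex.add_re]
        congr 1
        rw [Complex.re_sum]
        exact Finset.sum_congr rfl fun i _ => by
          rw [Complex.real_smul, Complex.re_ofReal_mul]
      have h6 : ∑ i, z i * y i = -r := by
        have e : ∀ i ∈ (Finset.univ : Finset (Fin (2*n))), z i * y i = -(y i ^ 2 / r) :=
          fun i _ => by simp only [hz]; ring
        rw [Finset.sum_congr rfl e, Finset.sum_neg_distrib, ← Finset.sum_div, ← hrr]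
        field_simp
      rw [h5, h6] at h2
      linarith
  · -- Part 2 : Ψ maps the Lorentz cone into PSD
    intro x hx
    have hx' : Real.sqrt (∑ i : Fin (2*n), (x i.castSucc) ^ 2) ≤ x (Fin.last (2*n)) := by
      simpa [lorentz] using hx
    exact psd_aux hherm hanti (fun i => x i.castSucc) (x (Fin.last (2*n))) hx'
  · -- Part 3 : Φ ∘ Ψ = 2^n id
    intro x
    funext j
    refine Fin.lastCases ?_ ?_ j
    · simp only [PhiMap, Fin.snoc_last, Pi.smul_apply, smul_eq_mul, PsiMap]
      rw [Matrix.trace_add, Matrix.trace_sum]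
      simp only [Matrix.trace_smul, htr, smul_zero, Finset.sum_const_zero, zero_add,
        Matrix.trace_one]
      rw [Complex.real_smul]
      simp [Complex.mul_re]
      norm_cast
      ring
    · intro i
      simp only [PhiMap, Fin.snoc_castSucc, Pi.smul_apply, smul_eq_mul]
      have hmul : PsiMap n U x * U i
          = (∑ k, x k.castSucc • (U k * U i)) + x (Fin.last (2*n)) • U i := by
        rw [PsiMap, add_mul, Finset.sum_mul]
        simp [smul_mul_assoc]
      rw [hmul, Matrix.trace_add, Matrix.trace_sum]
      simp_rw [Matrix.trace_smul, trU hanti, htr, smul_zero, add_zero]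
      simp_rw [smul_ite, smul_zero]
      rw [Finset.sum_ite_eq' Finset.univ i (fun k => x k.castSucc • ((2:ℂ)^n))]
      simp only [Finset.mem_univ, if_true]
      rw [Complex.real_smul]
      simp [Complex.mul_re]
      norm_cast
      ring
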